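/- Let n = |F| and let C ⊆ F^n be the full-length Reed-Solomon code of dimension k = n − n/|B| with evaluation points α_1,...,α_n enumerating F. Let I = {1,...,r}, let ζ_1,...,ζ_t be a basis of F over B, and let δ_1,...,δ_r ∈ F be nonzero elements satisfying tr_{F/B}((δ_ℓ/δ_j)·(α_s − α_j)/(α_j − α_ℓ)) = 0 for all 1 ≤ j ≤ r, all ℓ with j < ℓ ≤ r, and all s with j < s ≤ r. For each i ∈ {1,...,r}, define M_i ∈ F^{n×t} by M_i[j,w] = (δ_i/(α_j − α_i))·tr_{F/B}((ζ_w/δ_i)·(α_j − α_i)) for j ≠ i, and M_i[i,w] = ζ_w. Then the concatenated matrix M = [M_1 | M_2 | ··· | M_r] ∈ F^{n×rt} satisfies: every column of M lies in C^⊥, and M[I,:]·x ≠ 0 for every nonzero x ∈ B^{rt}; that is, M is a multiple-repair matrix for I. -/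

import Mathlib

/-- The Reed-Solomon code of dimension `k` with evaluation points `α 0, …, α (n-1)`. -/
def rsCode {F : Type*} [Field F] {n : ℕ} (k : ℕ) (α : Fin n → F) : Set (Fin n → F) :=
  {v | ∃ f : Polynomial F, f.degree < (k : ℕ) ∧ ∀ i, v i = f.eval (α i)}

/-- The field trace of `F` over a subfield `B` of index `t`, viewed with values in `F`:
`tr(x) = ∑_{m=0}^{t-1} x^(|B|^m)`. -/
def fieldTrace (B : Type*) {F : Type*} [Field B] [Field F] [Fintype B] [Algebra B F]
    (t : ℕ) (x : F) : F :=
  ∑ m ∈ Finset.range t, x ^ (Fintype.card B) ^ m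

section Aux
set_option linter.unusedSectionVars false
variable {B F : Type*} [Field B] [Field F] [Fintype B] [Fintype F] [Algebra B F] {t : ℕ}

lemma aux_char : ∃ p e : ℕ, p.Prime ∧ CharP F p ∧ Fintype.card B = p ^ e := by
  obtain ⟨p, hp⟩ := CharP.exists B
  haveI := hp
  have hprime : p.Prime := CharP.char_is_prime B p
  haveI : CharP F p := charP_of_injective_algebraMap (algebraMap B F).injective p
  obtain ⟨e, _, hcard⟩ := FiniteField.card B p
  exact ⟨p, e, hprime, inferInstance, hcard⟩

lemma ft_sum {ι : Type*} (s : Finset ι) (f : ι → F) :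
    fieldTrace B t (∑ i ∈ s, f i) = ∑ i ∈ s, fieldTrace B t (f i) := by
  obtain ⟨p, e, hp, hc, hcard⟩ := aux_char (B := B) (F := F)
  haveI := Fact.mk hp
  haveI := hc
  unfold fieldTrace
  rw [Finset.sum_comm]
  refine Finset.sum_congr rfl fun m _ => ?_
  rw [hcard, ← pow_mul]
  haveI : ExpChar F p := ExpChar.prime hp
  have h := map_sum (iterateFrobenius F p (e * m)) f s
  simp only [iterateFrobenius_def] at h
  exact h

lemma ft_add (x y : F) :
    fieldTrace B t (x + y) = fieldTrace B t x + fieldTrace B t y := by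
  obtain ⟨p, e, hp, hc, hcard⟩ := aux_char (B := B) (F := F)
  haveI := Fact.mk hp
  haveI := hc
  unfold fieldTrace
  rw [← Finset.sum_add_distrib]
  refine Finset.sum_congr rfl fun m _ => ?_
  rw [hcard, ← pow_mul]
  exact add_pow_char_pow x y p (e * m)

lemma ft_zero : fieldTrace B t (0 : F) = 0 := by
  unfold fieldTrace
  refine Finset.sum_eq_zero fun m _ => ?_
  exact zero_pow (pow_ne_zero m Fintype.card_ne_zero)

lemma ft_fix_mul {κ : F} (hκ : κ ^ Fintype.card B = κ) (y : F) :
    fieldTrace B t (κ * y) = κ * fieldTrace B t y := by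
  have hm : ∀ m : ℕ, κ ^ (Fintype.card B) ^ m = κ := by
    intro m
    induction m with
    | zero => simp
    | succ m ih => rw [pow_succ, pow_mul, ih, hκ]
  unfold fieldTrace
  rw [Finset.mul_sum]
  refine Finset.sum_congr rfl fun m _ => ?_
  rw [mul_pow, hm]

lemma ft_pow_card (hcardF : Fintype.card F = (Fintype.card B) ^ t) (y : F) :
    (fieldTrace B t y) ^ (Fintype.card B) = fieldTrace B t y := by
  obtain ⟨p, e, hp, hc, hcard⟩ := aux_char (B := B) (F := F)
  haveI := Fact.mk hp
  haveI := hc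
  set q := Fintype.card B with hq
  unfold fieldTrace
  have hsum : (∑ m ∈ Finset.range t, y ^ q ^ m) ^ q = ∑ m ∈ Finset.range t, (y ^ q ^ m) ^ q := by
    haveI : ExpChar F p := ExpChar.prime hp
    have h := map_sum (iterateFrobenius F p e) (fun m => y ^ q ^ m) (Finset.range t)
    simp only [iterateFrobenius_def] at h
    rw [← hcard] at h
    exact h
  rw [hsum]
  have hterm : ∀ m, (y ^ q ^ m) ^ q = y ^ q ^ (m + 1) := by
    intro m; rw [← pow_mul, ← pow_succ]
  simp_rw [hterm]
  have h1 : ∑ m ∈ Finset.range (t + 1), y ^ q ^ m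
      = (∑ m ∈ Finset.range t, y ^ q ^ (m + 1)) + y ^ q ^ 0 := Finset.sum_range_succ' _ t
  have h2 : ∑ m ∈ Finset.range (t + 1), y ^ q ^ m
      = (∑ m ∈ Finset.range t, y ^ q ^ m) + y ^ q ^ t := Finset.sum_range_succ _ t
  have h3 : y ^ q ^ t = y ^ q ^ 0 := by
    rw [pow_zero, pow_one, ← hcardF, FiniteField.pow_card]
  rw [h3] at h2
  exact add_right_cancel (h1.symm.trans h2)

lemma ft_algebraMap_mul (b : B) (y : F) :
    fieldTrace B t (algebraMap B F b * y) = algebraMap B F b * fieldTrace B t y := by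
  refine ft_fix_mul ?_ y
  rw [← map_pow, FiniteField.pow_card]

lemma sum_eval_eq_zero (P : Polynomial F) (h : P.natDegree < Fintype.card F - 1) :
    ∑ x : F, P.eval x = 0 := by
  simp_rw [Polynomial.eval_eq_sum_range]
  rw [Finset.sum_comm]
  refine Finset.sum_eq_zero fun m hm => ?_
  rw [← Finset.mul_sum, FiniteField.sum_pow_lt_card_sub_one F m ?_, mul_zero]
  have := Finset.mem_range.mp hm
  omega

end Aux

/-- Let `n = |F|`, `C ⊆ F^n` the full-length Reed-Solomon code of
dimension `k = n - n/|B|`, `I = {1,…,r}` (the first `r` indices), `ζ` a basis of `F`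
over `B`, and nonzero `δ_1, …, δ_r` satisfying
`tr((δ_ℓ/δ_j)·(α_s - α_j)/(α_j - α_ℓ)) = 0` for all `j < ℓ ≤ r` and `j < s ≤ r`.
With `M_i[j,w] = (δ_i/(α_j - α_i))·tr((ζ_w/δ_i)·(α_j - α_i))` for `j ≠ i` and
`M_i[i,w] = ζ_w`, the concatenated matrix `M = [M_1 | ⋯ | M_r] ∈ F^{n × rt}`
(columns indexed by pairs `(i,w)`) has all columns in the dual code `C^⊥` and
satisfies `M[I,:]·x ≠ 0` for all nonzero `x ∈ B^{rt}`; i.e. `M` is a multiple-repair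
matrix for `I`. -/
theorem concatenated_matrix_is_multiple_repair_matrix
    {B F : Type*} [Field B] [Field F] [Fintype B] [Fintype F] [Algebra B F]
    {n t r k : ℕ} (ht : Module.finrank B F = t)
    (hn : n = Fintype.card F)
    (α : Fin n → F) (hα : Function.Bijective α)
    (hk : k = n - n / Fintype.card B)
    (hrn : r ≤ n)
    (ζ : Module.Basis (Fin t) B F)
    (δ : Fin r → F) (hδ : ∀ i, δ i ≠ 0)
    (htr : ∀ j ℓ s : Fin r, j < ℓ → j < s →
      fieldTrace B t ((δ ℓ / δ j) *
        ((α (Fin.castLE hrn s) - α (Fin.castLE hrn j)) /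
          (α (Fin.castLE hrn j) - α (Fin.castLE hrn ℓ)))) = 0)
    (M : Fin n → Fin r × Fin t → F)
    (hM : ∀ (j : Fin n) (i : Fin r) (w : Fin t),
      M j (i, w) =
        if j = Fin.castLE hrn i then ζ w
        else (δ i / (α j - α (Fin.castLE hrn i))) *
          fieldTrace B t ((ζ w / δ i) * (α j - α (Fin.castLE hrn i)))) :
    (∀ p : Fin r × Fin t, ∀ c ∈ rsCode k α, ∑ j, c j * M j p = 0) ∧
    (∀ x : Fin r × Fin t → B, x ≠ 0 →
      ∃ i : Fin r, ∑ p, M (Fin.castLE hrn i) p * algebraMap B F (x p) ≠ 0) := by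
  classical
  have hq2 : 2 ≤ Fintype.card B := Fintype.one_lt_card
  have hcardF : Fintype.card F = (Fintype.card B) ^ t := by
    have := Module.card_fintype ζ
    simpa using this
  have ht1 : 1 ≤ t := by
    by_contra h
    have ht0 : t = 0 := by omega
    rw [ht0, pow_zero] at hcardF
    exact absurd hcardF (by have : 2 ≤ Fintype.card F := Fintype.one_lt_card; omega)
  have hnq : n = (Fintype.card B) ^ t := hn.trans hcardF
  have hpow : (Fintype.card B) ^ t = (Fintype.card B) ^ (t - 1) * Fintype.card B := by
    rw [← pow_succ]
    congr 1
    omega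
  have hdiv : n / Fintype.card B = (Fintype.card B) ^ (t - 1) := by
    rw [hnq, hpow]
    exact Nat.mul_div_cancel _ (by omega)
  have hkval : k = (Fintype.card B) ^ t - (Fintype.card B) ^ (t - 1) := by
    rw [hk, hdiv, hnq]
  have hQ1 : 1 ≤ (Fintype.card B) ^ (t - 1) := Nat.one_le_pow _ _ (by omega)
  have h2t : (Fintype.card B) ^ (t - 1) * 2 ≤ (Fintype.card B) ^ t := by
    rw [hpow]
    exact Nat.mul_le_mul_left _ hq2
  constructor
  · -- Part 1: columns in dual code
    rintro ⟨i, w⟩ c ⟨f, hdeg, hcf⟩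
    set g : Polynomial F := ∑ m ∈ Finset.range t,
        Polynomial.C (δ i * (ζ w / δ i) ^ (Fintype.card B) ^ m) *
          (Polynomial.X - Polynomial.C (α (Fin.castLE hrn i))) ^ ((Fintype.card B) ^ m - 1)
      with hgdef
    have hgeval : ∀ x : F, g.eval x = ∑ m ∈ Finset.range t,
        δ i * (ζ w / δ i) ^ (Fintype.card B) ^ m *
          (x - α (Fin.castLE hrn i)) ^ ((Fintype.card B) ^ m - 1) := by
      intro x
      rw [hgdef]
      simp [Polynomial.eval_finset_sum]
    have hMg : ∀ j : Fin n, M j (i, w) = g.eval (α j) := by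
      intro j
      rw [hM j i w, hgeval]
      by_cases hji : j = Fin.castLE hrn i
      · rw [if_pos hji]
        have hsub : α j - α (Fin.castLE hrn i) = 0 := by rw [hji, sub_self]
        rw [Finset.sum_eq_single_of_mem 0 (Finset.mem_range.mpr (by omega))
          (fun m _ hm0 => by
            have h2m : 2 ≤ (Fintype.card B) ^ m :=
              le_trans hq2 (Nat.le_self_pow hm0 _)
            rw [hsub, zero_pow (by omega : (Fintype.card B) ^ m - 1 ≠ 0), mul_zero])]
        rw [hsub]
        norm_num
        rw [mul_comm, div_mul_cancel₀ _ (hδ i)]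
      · rw [if_neg hji]
        have hxne : α j - α (Fin.castLE hrn i) ≠ 0 :=
          sub_ne_zero.mpr fun h => hji (hα.injective h)
        unfold fieldTrace
        rw [Finset.mul_sum]
        refine Finset.sum_congr rfl fun m _ => ?_
        have hqm1 : (Fintype.card B) ^ m = ((Fintype.card B) ^ m - 1) + 1 := by
          have : 1 ≤ (Fintype.card B) ^ m := Nat.one_le_pow _ _ (by omega)
          omega
        have hpow2 : (α j - α (Fin.castLE hrn i)) ^ (Fintype.card B) ^ m
            = (α j - α (Fin.castLE hrn i)) ^ ((Fintype.card B) ^ m - 1)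
                * (α j - α (Fin.castLE hrn i)) := by
          conv_lhs => rw [hqm1]
          rw [pow_succ]
        rw [mul_pow, hpow2]
        have hrearr : δ i / (α j - α (Fin.castLE hrn i)) *
            ((ζ w / δ i) ^ (Fintype.card B) ^ m *
              ((α j - α (Fin.castLE hrn i)) ^ ((Fintype.card B) ^ m - 1) *
                (α j - α (Fin.castLE hrn i))))
            = δ i * (ζ w / δ i) ^ (Fintype.card B) ^ m *
                (α j - α (Fin.castLE hrn i)) ^ ((Fintype.card B) ^ m - 1) *
                ((α j - α (Fin.castLE hrn i)) / (α j - α (Fin.castLE hrn i))) := by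
          ring
        rw [hrearr, div_self hxne, mul_one]
    have key : ∑ j, c j * M j (i, w) = ∑ x : F, (f * g).eval x :=
      Fintype.sum_bijective α hα _ _ fun j => by
        rw [hcf j, hMg j, Polynomial.eval_mul]
    rw [key]
    apply sum_eval_eq_zero
    have hgd : g.natDegree ≤ (Fintype.card B) ^ (t - 1) - 1 := by
      rw [hgdef]
      refine Polynomial.natDegree_sum_le_of_forall_le _ _ fun m hm => ?_
      refine le_trans (Polynomial.natDegree_C_mul_le _ _) ?_
      rw [Polynomial.natDegree_pow, Polynomial.natDegree_X_sub_C, mul_one]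
      have hmt : m ≤ t - 1 := by have := Finset.mem_range.mp hm; omega
      exact Nat.sub_le_sub_right (Nat.pow_le_pow_right (by omega) hmt) 1
    rw [hcardF]
    by_cases hfg : f * g = 0
    · rw [hfg, Polynomial.natDegree_zero]
      omega
    · have hf0 : f ≠ 0 := fun h => hfg (by rw [h, zero_mul])
      have hg0 : g ≠ 0 := fun h => hfg (by rw [h, mul_zero])
      rw [Polynomial.natDegree_mul hf0 hg0]
      have hfd : f.natDegree < k := (Polynomial.natDegree_lt_iff_degree_lt hf0).mpr hdeg
      omega
  · -- Part 2: invertibility over B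
    intro x hx
    by_contra hcon
    push_neg at hcon
    set μ : Fin r → F := fun i => ∑ w, algebraMap B F (x (i, w)) * ζ w with hμdef
    set τ : Fin r → Fin r → F := fun i j => fieldTrace B t
      ((μ i / δ i) * (α (Fin.castLE hrn j) - α (Fin.castLE hrn i))) with hτdef
    have hτfix : ∀ i j, τ i j ^ Fintype.card B = τ i j := by
      intro i j
      simp only [hτdef]
      exact ft_pow_card hcardF _
    have hτ0 : ∀ i j, μ i = 0 → τ i j = 0 := by
      intro i j h
      simp only [hτdef, h, zero_div, zero_mul]
      exact ft_zero
    have hrow : ∀ j : Fin r, μ j + ∑ i : Fin r,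
        (if i = j then 0 else
          (δ i / (α (Fin.castLE hrn j) - α (Fin.castLE hrn i))) * τ i j) = 0 := by
      intro j
      have h0 := hcon j
      rw [Fintype.sum_prod_type] at h0
      have hterm : ∀ i : Fin r,
          (∑ w, M (Fin.castLE hrn j) (i, w) * algebraMap B F (x (i, w)))
          = (if i = j then μ j else
              (δ i / (α (Fin.castLE hrn j) - α (Fin.castLE hrn i))) * τ i j) := by
        intro i
        by_cases hij : i = j
        · subst hij
          rw [if_pos rfl, hμdef]
          refine Finset.sum_congr rfl fun w _ => ?_
          rw [hM, if_pos rfl, mul_comm]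
        · rw [if_neg hij]
          have hne : Fin.castLE hrn j ≠ Fin.castLE hrn i :=
            fun h => hij (Fin.castLE_injective hrn h).symm
          have hw : ∀ w : Fin t, M (Fin.castLE hrn j) (i, w) * algebraMap B F (x (i, w))
              = (δ i / (α (Fin.castLE hrn j) - α (Fin.castLE hrn i))) *
                  fieldTrace B t (algebraMap B F (x (i, w)) *
                    ((ζ w / δ i) * (α (Fin.castLE hrn j) - α (Fin.castLE hrn i)))) := by
            intro w
            rw [hM, if_neg hne, ft_algebraMap_mul]
            ring
          simp_rw [hw]
          rw [← Finset.mul_sum, ← ft_sum]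
          have harg : (∑ w, algebraMap B F (x (i, w)) *
                ((ζ w / δ i) * (α (Fin.castLE hrn j) - α (Fin.castLE hrn i))))
              = (μ i / δ i) * (α (Fin.castLE hrn j) - α (Fin.castLE hrn i)) := by
            rw [hμdef]
            rw [Finset.sum_div, Finset.sum_mul]
            refine Finset.sum_congr rfl fun w _ => ?_
            ring
          rw [harg, hτdef]
      rw [Finset.sum_congr rfl (fun i _ => hterm i)] at h0
      have hsplit : ∀ i : Fin r,
          (if i = j then μ j else
            (δ i / (α (Fin.castLE hrn j) - α (Fin.castLE hrn i))) * τ i j)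
          = (if i = j then μ j else 0) + (if i = j then 0 else
            (δ i / (α (Fin.castLE hrn j) - α (Fin.castLE hrn i))) * τ i j) := by
        intro i
        by_cases h : i = j <;> simp [h]
      rw [Finset.sum_congr rfl (fun i _ => hsplit i), Finset.sum_add_distrib] at h0
      rw [Finset.sum_ite_eq' Finset.univ j (fun _ => μ j)] at h0
      simpa using h0
    have hA : ∀ N : ℕ, ∀ j s : Fin r, (j : ℕ) = N → j < s → τ j s = 0 := by
      intro N
      induction N using Nat.strong_induction_on with
      | _ N IH =>
        intro j s hN hjs
        subst hN
        have hrj := hrow j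
        have h2 : fieldTrace B t ((μ j + ∑ i : Fin r,
            (if i = j then 0 else
              (δ i / (α (Fin.castLE hrn j) - α (Fin.castLE hrn i))) * τ i j)) *
            ((α (Fin.castLE hrn s) - α (Fin.castLE hrn j)) / δ j)) = 0 := by
          rw [hrj, zero_mul]
          exact ft_zero
        have e1 : (∑ i : Fin r,
            (if i = j then 0 else
              (δ i / (α (Fin.castLE hrn j) - α (Fin.castLE hrn i))) * τ i j)) *
            ((α (Fin.castLE hrn s) - α (Fin.castLE hrn j)) / δ j)
            = ∑ i : Fin r,
            ((if i = j then 0 else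
              (δ i / (α (Fin.castLE hrn j) - α (Fin.castLE hrn i))) * τ i j) *
            ((α (Fin.castLE hrn s) - α (Fin.castLE hrn j)) / δ j)) :=
          Finset.sum_mul _ _ _
        rw [add_mul, e1, ft_add, ft_sum] at h2
        have h1 := h2
        have hμterm : fieldTrace B t (μ j *
            ((α (Fin.castLE hrn s) - α (Fin.castLE hrn j)) / δ j)) = τ j s := by
          simp only [hτdef]
          congr 1
          ring
        have hterm : ∀ i : Fin r, i ∈ Finset.univ → fieldTrace B t
            ((if i = j then 0 else
              (δ i / (α (Fin.castLE hrn j) - α (Fin.castLE hrn i))) * τ i j) *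
              ((α (Fin.castLE hrn s) - α (Fin.castLE hrn j)) / δ j)) = 0 := by
          intro i _
          by_cases hij : i = j
          · rw [if_pos hij, zero_mul]
            exact ft_zero
          · rw [if_neg hij]
            have harg : (δ i / (α (Fin.castLE hrn j) - α (Fin.castLE hrn i))) * τ i j *
                ((α (Fin.castLE hrn s) - α (Fin.castLE hrn j)) / δ j)
                = τ i j * ((δ i / δ j) *
                  ((α (Fin.castLE hrn s) - α (Fin.castLE hrn j)) /
                    (α (Fin.castLE hrn j) - α (Fin.castLE hrn i)))) := by
              ring
            rw [harg, ft_fix_mul (hτfix i j)]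
            rcases lt_or_gt_of_ne hij with hlt | hgt
            · rw [IH (i : ℕ) hlt i j rfl hlt, zero_mul]
            · rw [htr j i s hgt hjs, mul_zero]
        rw [Finset.sum_eq_zero hterm, add_zero, hμterm] at h1
        exact h1
    have hB : ∀ N : ℕ, ∀ j : Fin r, r - (j : ℕ) = N → μ j = 0 := by
      intro N
      induction N using Nat.strong_induction_on with
      | _ N IH =>
        intro j hN
        have h1 := hrow j
        have hterm : ∀ i : Fin r, i ∈ Finset.univ →
            (if i = j then 0 else
              (δ i / (α (Fin.castLE hrn j) - α (Fin.castLE hrn i))) * τ i j) = 0 := by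
          intro i _
          by_cases hij : i = j
          · rw [if_pos hij]
          · rw [if_neg hij]
            rcases lt_or_gt_of_ne hij with hlt | hgt
            · rw [hA (i : ℕ) i j rfl hlt, mul_zero]
            · have hμi : μ i = 0 := by
                refine IH (r - (i : ℕ)) ?_ i rfl
                have hi := i.isLt
                have hj := j.isLt
                have : (j : ℕ) < (i : ℕ) := hgt
                omega
              rw [hτ0 i j hμi, mul_zero]
        rw [Finset.sum_eq_zero hterm, add_zero] at h1
        exact h1
    obtain ⟨p0, hp0⟩ := Function.ne_iff.mp hx
    obtain ⟨i0, w0⟩ := p0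
    have hμ0 : μ i0 = 0 := hB (r - (i0 : ℕ)) i0 rfl
    have hz : ∀ wq : Fin t, x (i0, wq) = 0 := by
      have hli := Fintype.linearIndependent_iff.mp ζ.linearIndependent
        (fun w => x (i0, w)) ?_
      · exact hli
      · simp_rw [Algebra.smul_def]
        simpa [hμdef] using hμ0
    exact hp0 (by simpa using hz w0)
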